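/- arXiv:quant-ph/9909080 — 4 statements merged into one kernel-verified Lean document; each statement's English description precedes it below -/
import Mathlib

section
/- In a nondegenerate *-algebra with unity (axioms: complex scalars embed, associative multiplication, scalars commute with all elements, left distributivity, involution with (fg)* = g*f*, (f+g)* = f* + g*, f** = f, and f*f = 0 implies f = 0), the right distributive law (f+g)h = fh + gh holds for all elements f, g, h. -/
/-- In a nondegenerate *-algebra with unity (axioms (O1)-(O5), without assuming
commutativity of addition or right distributivity), the right distributive law
`(f+g)h = fh + gh` holds. -/
theorem right_distrib_of_star_algebra_axioms
    {E : Type*} (add mul : E → E → E) (star : E → E) (c : ℂ → E)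
    (hc_inj : Function.Injective c)
    (hc_add : ∀ α β : ℂ, c (α + β) = add (c α) (c β))
    (hc_mul : ∀ α β : ℂ, c (α * β) = mul (c α) (c β))
    (hc_star : ∀ α : ℂ, c (starRingEnd ℂ α) = star (c α))
    (mul_assoc : ∀ f g h : E, mul (mul f g) h = mul f (mul g h))
    (scalar_comm : ∀ (α : ℂ) (f : E), mul (c α) f = mul f (c α))
    (zero_mul : ∀ f : E, mul (c 0) f = c 0)
    (one_mul : ∀ f : E, mul (c 1) f = f)
    (add_assoc : ∀ f g h : E, add (add f g) h = add f (add g h))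
    (left_distrib : ∀ f g h : E, mul f (add g h) = add (mul f g) (mul f h))
    (add_zero : ∀ f : E, add f (c 0) = f)
    (star_star : ∀ f : E, star (star f) = f)
    (star_mul : ∀ f g : E, star (mul f g) = mul (star g) (star f))
    (star_add : ∀ f g : E, star (add f g) = add (star f) (star g))
    (nondeg : ∀ f : E, mul (star f) f = c 0 → f = c 0) :
    ∀ f g h : E, mul (add f g) h = add (mul f h) (mul g h) := by
  intro f g h
  have key : star (mul (add f g) h) = star (add (mul f h) (mul g h)) := by
    rw [star_mul, star_add, left_distrib, ← star_mul, ← star_mul, ← star_add]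
  calc mul (add f g) h = star (star (mul (add f g) h)) := (star_star _).symm
    _ = star (star (add (mul f h) (mul g h))) := by rw [key]
    _ = add (mul f h) (mul g h) := star_star _
end

section
/- In a nondegenerate *-algebra with unity as axiomatized (with left distributivity, scalar commutation, and involution axioms, but without assuming commutativity of addition), addition is commutative: f + g = g + f for all elements f, g. -/
/-- In a nondegenerate *-algebra with unity (axioms (O1)-(O5), without assuming
commutativity of addition or right distributivity), addition is commutative: `f + g = g + f`. -/
theorem add_comm_of_star_algebra_axioms
    {E : Type*} (add mul : E → E → E) (star : E → E) (c : ℂ → E)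
    (hc_inj : Function.Injective c)
    (hc_add : ∀ α β : ℂ, c (α + β) = add (c α) (c β))
    (hc_mul : ∀ α β : ℂ, c (α * β) = mul (c α) (c β))
    (hc_star : ∀ α : ℂ, c (starRingEnd ℂ α) = star (c α))
    (mul_assoc : ∀ f g h : E, mul (mul f g) h = mul f (mul g h))
    (scalar_comm : ∀ (α : ℂ) (f : E), mul (c α) f = mul f (c α))
    (zero_mul : ∀ f : E, mul (c 0) f = c 0)
    (one_mul : ∀ f : E, mul (c 1) f = f)
    (add_assoc : ∀ f g h : E, add (add f g) h = add f (add g h))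
    (left_distrib : ∀ f g h : E, mul f (add g h) = add (mul f g) (mul f h))
    (add_zero : ∀ f : E, add f (c 0) = f)
    (star_star : ∀ f : E, star (star f) = f)
    (star_mul : ∀ f g : E, star (mul f g) = mul (star g) (star f))
    (star_add : ∀ f g : E, star (add f g) = add (star f) (star g))
    (nondeg : ∀ f : E, mul (star f) f = c 0 → f = c 0) :
    ∀ f g : E, add f g = add g f := by
  -- mul by c 0 on the right kills
  have mul_zero : ∀ f : E, mul f (c 0) = c 0 := fun f => by
    rw [← scalar_comm, zero_mul]
  have mul_one : ∀ f : E, mul f (c 1) = f := fun f => by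
    rw [← scalar_comm, one_mul]
  -- right inverse: f + (-1)f = 0
  have hinv : ∀ f : E, add f (mul (c (-1)) f) = c 0 := fun f => by
    have : add f (mul (c (-1)) f) = mul f (add (c 1) (c (-1))) := by
      rw [left_distrib, mul_one, scalar_comm]
    rw [this, ← hc_add]
    norm_num [mul_zero]
  -- left inverse: (-1)f + f = 0
  have hinv' : ∀ f : E, add (mul (c (-1)) f) f = c 0 := fun f => by
    have : add (mul (c (-1)) f) f = mul f (add (c (-1)) (c 1)) := by
      rw [left_distrib, mul_one, scalar_comm]
    rw [this, ← hc_add]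
    norm_num [mul_zero]
  -- left zero law
  have zero_add : ∀ f : E, add (c 0) f = f := fun f => by
    calc add (c 0) f = add (add f (mul (c (-1)) f)) f := by rw [hinv]
    _ = add f (add (mul (c (-1)) f) f) := add_assoc ..
    _ = f := by rw [hinv', add_zero]
  -- cancellation laws
  have cancel_left : ∀ a x y : E, add a x = add a y → x = y := by
    intro a x y h
    calc x = add (c 0) x := (zero_add x).symm
    _ = add (add (mul (c (-1)) a) a) x := by rw [hinv']
    _ = add (mul (c (-1)) a) (add a x) := add_assoc ..
    _ = add (mul (c (-1)) a) (add a y) := by rw [h]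
    _ = add (add (mul (c (-1)) a) a) y := (add_assoc ..).symm
    _ = y := by rw [hinv', zero_add]
  have cancel_right : ∀ a x y : E, add x a = add y a → x = y := by
    intro a x y h
    calc x = add x (c 0) := (add_zero x).symm
    _ = add x (add a (mul (c (-1)) a)) := by rw [hinv]
    _ = add (add x a) (mul (c (-1)) a) := (add_assoc ..).symm
    _ = add (add y a) (mul (c (-1)) a) := by rw [h]
    _ = add y (add a (mul (c (-1)) a)) := add_assoc ..
    _ = y := by rw [hinv, add_zero]
  -- doubling: 2·x = x + x
  have double : ∀ x : E, mul (c 2) x = add x x := fun x => by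
    have h2 : (2 : ℂ) = 1 + 1 := by norm_num
    rw [scalar_comm, h2, hc_add, left_distrib, mul_one]
  intro f g
  have key : add (add f g) (add f g) = add (add f f) (add g g) := by
    rw [← double, left_distrib, double, double]
  have key2 : add g (add f g) = add f (add g g) := by
    apply cancel_left f
    calc add f (add g (add f g)) = add (add f g) (add f g) := (add_assoc ..).symm
    _ = add (add f f) (add g g) := key
    _ = add f (add f (add g g)) := add_assoc ..
  apply cancel_right g
  rw [add_assoc, add_assoc, key2]
end

section
/- Let H be a complex Hilbert space of dimension > 1 and Ψ a set of vectors in H such that any two distinct vectors of Ψ are neither parallel nor orthogonal. Then the set Π₁(Ψ) = { rank-one operators φψ* : φ ∈ H, ψ ∈ Ψ } (viewed in the algebra of bounded operators on H) is closed under left multiplication by arbitrary bounded operators, and any two commuting normal elements of Π₁(Ψ) that also commute with each other's adjoints have a sum in Π₁(Ψ); moreover the identity operator is not in Π₁(Ψ), so Π₁(Ψ) is a valid selection. -/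
open scoped InnerProductSpace

section aux
variable {H : Type*} [NormedAddCommGroup H] [InnerProductSpace ℂ H] [CompleteSpace H]

private lemma rk_apply' (ψ φ x : H) : ((innerSL ℂ ψ).smulRight φ) x = ⟪ψ, x⟫_ℂ • φ := rfl

private lemma rk_adjoint' (ψ φ : H) :
    ContinuousLinearMap.adjoint ((innerSL ℂ ψ).smulRight φ) = (innerSL ℂ φ).smulRight ψ := by
  symm
  rw [ContinuousLinearMap.eq_adjoint_iff]
  intro x y
  simp only [rk_apply', inner_smul_left, inner_smul_right, inner_conj_symm]
  ring

private lemma normal_rk' {ψ φ : H} (hφ : φ ≠ 0) (hψ : ψ ≠ 0)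
    (h : Commute ((innerSL ℂ ψ).smulRight φ)
      (ContinuousLinearMap.adjoint ((innerSL ℂ ψ).smulRight φ))) :
    ∃ c : ℂ, c ≠ 0 ∧ φ = c • ψ := by
  have h' := h.eq
  rw [rk_adjoint'] at h'
  have key := ContinuousLinearMap.ext_iff.mp h' φ
  simp only [ContinuousLinearMap.mul_apply, rk_apply', inner_smul_right, smul_smul] at key
  have hφφ : ⟪φ, φ⟫_ℂ ≠ 0 := inner_self_ne_zero.mpr hφ
  have hψψ : ⟪ψ, ψ⟫_ℂ ≠ 0 := inner_self_ne_zero.mpr hψ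
  have h3 := congrArg (fun v => (⟪φ, φ⟫_ℂ * ⟪ψ, ψ⟫_ℂ)⁻¹ • v) key
  simp only [smul_smul] at h3
  rw [inv_mul_cancel₀ (mul_ne_zero hφφ hψψ), one_smul] at h3
  exact ⟨_, fun h0 => hφ (by rw [h3, h0, zero_smul]), h3⟩
end aux

/-- For a set `Ψ` of pairwise non-parallel, non-orthogonal vectors in a Hilbert
space of dimension `> 1`, the set `Π₁(Ψ)` of rank-one operators `φψ*` with
`ψ ∈ Ψ` is a valid selection in the algebra of bounded operators. -/
theorem rank_one_set_is_valid_selection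
    {H : Type*} [NormedAddCommGroup H] [InnerProductSpace ℂ H] [CompleteSpace H]
    (hdim : 1 < Module.rank ℂ H)
    (Ψ : Set H)
    (hΨ : ∀ ψ ψ' : H, ψ ∈ Ψ → ψ' ∈ Ψ → ψ ≠ ψ' →
      LinearIndependent ℂ ![ψ, ψ'] ∧ ⟪ψ, ψ'⟫_ℂ ≠ 0) :
    (∀ (A T : H →L[ℂ] H),
      T ∈ {T : H →L[ℂ] H | ∃ (φ : H) (ψ : H), ψ ∈ Ψ ∧ T = (innerSL ℂ ψ).smulRight φ} →
      A * T ∈ {T : H →L[ℂ] H | ∃ (φ : H) (ψ : H), ψ ∈ Ψ ∧ T = (innerSL ℂ ψ).smulRight φ}) ∧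
    (∀ S T : H →L[ℂ] H,
      S ∈ {T : H →L[ℂ] H | ∃ (φ : H) (ψ : H), ψ ∈ Ψ ∧ T = (innerSL ℂ ψ).smulRight φ} →
      T ∈ {T : H →L[ℂ] H | ∃ (φ : H) (ψ : H), ψ ∈ Ψ ∧ T = (innerSL ℂ ψ).smulRight φ} →
      Commute S (ContinuousLinearMap.adjoint S) →
      Commute T (ContinuousLinearMap.adjoint T) →
      Commute S T → Commute S (ContinuousLinearMap.adjoint T) →
      S + T ∈ {T : H →L[ℂ] H | ∃ (φ : H) (ψ : H), ψ ∈ Ψ ∧ T = (innerSL ℂ ψ).smulRight φ}) ∧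
    (1 : H →L[ℂ] H) ∉
      {T : H →L[ℂ] H | ∃ (φ : H) (ψ : H), ψ ∈ Ψ ∧ T = (innerSL ℂ ψ).smulRight φ} := by
  have hz : ∀ (a b : H), a = 0 ∨ b = 0 → (innerSL ℂ b).smulRight a = 0 := by
    rintro a b (rfl | rfl) <;> ext x <;> simp [rk_apply']
  refine ⟨?_, ?_, ?_⟩
  · rintro A T ⟨φ, ψ, hψΨ, rfl⟩
    refine ⟨A φ, ψ, hψΨ, ?_⟩
    ext x
    simp [rk_apply', ContinuousLinearMap.mul_apply, map_smul]
  · rintro S T ⟨φ, ψ, hψΨ, rfl⟩ ⟨φ', ψ', hψ'Ψ, rfl⟩ hSN hTN hST -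
    by_cases h1 : φ = 0 ∨ ψ = 0
    · exact ⟨φ', ψ', hψ'Ψ, by rw [hz _ _ h1, zero_add]⟩
    by_cases h2 : φ' = 0 ∨ ψ' = 0
    · exact ⟨φ, ψ, hψΨ, by rw [hz _ _ h2, add_zero]⟩
    push_neg at h1 h2
    by_cases hpsi : ψ = ψ'
    · refine ⟨φ + φ', ψ, hψΨ, ?_⟩
      ext x
      simp [rk_apply', hpsi, smul_add]
    exfalso
    obtain ⟨hLI, hinner⟩ := hΨ ψ ψ' hψΨ hψ'Ψ hpsi
    obtain ⟨c, hc0, hcφ⟩ := normal_rk' h1.1 h1.2 hSN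
    obtain ⟨c', hc'0, hc'φ⟩ := normal_rk' h2.1 h2.2 hTN
    have key : (⟪ψ', ψ'⟫_ℂ * c' * ⟪ψ, ψ'⟫_ℂ * c) • ψ
        = (⟪ψ, ψ'⟫_ℂ * c * ⟪ψ', ψ⟫_ℂ * c') • ψ' := by
      have h := ContinuousLinearMap.ext_iff.mp hST.eq ψ'
      rw [hcφ, hc'φ] at h
      simp only [ContinuousLinearMap.mul_apply, rk_apply', inner_smul_right, smul_smul] at h
      convert h using 2 <;> ring
    obtain ⟨ha, -⟩ := LinearIndependent.pair_iff.mp hLI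
      (⟪ψ', ψ'⟫_ℂ * c' * ⟪ψ, ψ'⟫_ℂ * c) (-(⟪ψ, ψ'⟫_ℂ * c * ⟪ψ', ψ⟫_ℂ * c'))
      (by rw [neg_smul, key]; exact add_neg_cancel _)
    exact (mul_ne_zero (mul_ne_zero
      (mul_ne_zero (inner_self_ne_zero.mpr h2.2) hc'0) hinner) hc0) ha
  · rintro ⟨φ, ψ, hψΨ, hid⟩
    have hle : Module.rank ℂ H ≤ 1 := by
      rw [rank_le_one_iff]
      refine ⟨φ, fun w => ⟨⟪ψ, w⟫_ℂ, ?_⟩⟩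
      have := ContinuousLinearMap.ext_iff.mp hid w
      simpa [rk_apply'] using this.symm
    exact absurd hle (not_le.mpr hdim)
end

section
/- Let ≈ be a relation on a unital *-algebra E satisfying reflexivity, symmetry, transitivity, stability under adding elements to both sides, and stability under left multiplication, and suppose 1 ≈ 0 does not hold. If e is an event (e² = e = e*) and e ≈ λ for some complex number λ, then λ = 0 or λ = 1. -/
/-- If a consistent logically closed statement `≈` implies `e ≈ λ` for an event
`e`, then `λ = 0` or `λ = 1`. -/
theorem event_weakly_equal_scalar
    {E : Type*} [Ring E] [StarRing E] [Algebra ℂ E]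
    (r : E → E → Prop)
    (R1 : ∀ f : E, r f f)
    (R2 : ∀ f g : E, r f g → r g f)
    (R3 : ∀ f g h : E, r f g → r g h → r f h)
    (R4 : ∀ f g h : E, r f g → r (f + h) (g + h))
    (R5 : ∀ f g h : E, r f g → r (h * f) (h * g))
    (hcons : ¬ r 1 0)
    (e : E) (he_idem : e * e = e) (he_star : star e = e)
    (lam : ℂ) (h : r e (algebraMap ℂ E lam)) :
    lam = 0 ∨ lam = 1 := by
  by_contra hc
  push_neg at hc
  obtain ⟨h0, h1⟩ := hc
  -- e ≈ e * λ  (from multiplying h on the left by e)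
  have h2 : r e (e * algebraMap ℂ E lam) := by
    have := R5 e (algebraMap ℂ E lam) e h
    rwa [he_idem] at this
  -- λ * e ≈ λ²  (from multiplying h on the left by λ)
  have h3 : r (algebraMap ℂ E lam * e) (algebraMap ℂ E (lam * lam)) := by
    have := R5 e (algebraMap ℂ E lam) (algebraMap ℂ E lam) h
    rwa [← map_mul] at this
  rw [← Algebra.commutes lam e] at h2
  have h4 : r e (algebraMap ℂ E (lam * lam)) := R3 _ _ _ h2 h3
  -- so λ ≈ λ²
  have h5 : r (algebraMap ℂ E lam) (algebraMap ℂ E (lam * lam)) :=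
    R3 _ _ _ (R2 _ _ h) h4
  -- subtract λ
  have h6 : r 0 (algebraMap ℂ E (lam * lam - lam)) := by
    have := R4 _ _ (-(algebraMap ℂ E lam)) h5
    rwa [add_neg_cancel, ← map_neg, ← map_add, ← sub_eq_add_neg] at this
  have hne : lam * lam - lam ≠ 0 := by
    intro hz
    have hfac : lam * (lam - 1) = 0 := by linear_combination hz
    rcases mul_eq_zero.mp hfac with hl | hl
    · exact h0 hl
    · exact h1 (by linear_combination hl)
  -- multiply by the inverse
  have h7 := R5 0 (algebraMap ℂ E (lam * lam - lam))
    (algebraMap ℂ E (lam * lam - lam)⁻¹) h6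
  rw [mul_zero, ← map_mul, inv_mul_cancel₀ hne, map_one] at h7
  exact hcons (R2 _ _ h7)
end
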